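/- Let U = [[u, −t†], [t, u†]] be a unitary 2×2 matrix with u, t ∈ D[ω]. Then for every k ≥ 0, (√2)^k u ∈ Z[ω] if and only if (√2)^k t ∈ Z[ω]; in particular, u and t have the same least denominator exponent. -/

import Mathlib

noncomputable def ω : ℂ := (1 + Complex.I) / (Real.sqrt 2 : ℂ)

noncomputable def zω (a b c d : ℤ) : ℂ := a * ω ^ 3 + b * ω ^ 2 + c * ω + d

/-- Membership in ℤ[ω]. -/
def inZω (t : ℂ) : Prop := ∃ a b c d : ℤ, t = zω a b c d

/-- Membership in D[ω] = ℤ[1/√2, i]. -/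
def inDω (t : ℂ) : Prop := ∃ k : ℕ, inZω ((Real.sqrt 2 : ℂ) ^ k * t)


lemma r2_sq : (Real.sqrt 2 : ℂ)^2 = 2 := by
  norm_cast; rw [Real.sq_sqrt]; norm_num
lemma r2_ne : (Real.sqrt 2 : ℂ) ≠ 0 := by simp
lemma ω2 : ω^2 = Complex.I := by
  rw [ω, div_pow, r2_sq, div_eq_iff (two_ne_zero)]
  linear_combination Complex.I_sq
lemma hω : ω = ((Real.sqrt 2:ℂ) + (Real.sqrt 2:ℂ)*Complex.I)/2 := by
  rw [ω, div_eq_div_iff r2_ne two_ne_zero]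
  linear_combination (-1-Complex.I)*r2_sq
lemma hr : (Real.sqrt 2 : ℂ) = ω - ω^3 := by
  have h3 : ω^3 = Complex.I * ω := by rw [pow_succ, ω2]
  rw [h3, ω]
  have h0 := r2_ne
  have h2 := r2_sq
  field_simp
  linear_combination h2 + Complex.I_sq
lemma ω4 : ω^4 = -1 := by
  rw [show (4:ℕ) = 2*2 from rfl, pow_mul, ω2, Complex.I_sq]
lemma zω_mul (a b c d a' b' c' d' : ℤ) :
    zω a b c d * zω a' b' c' d' =
    zω (a*d'+b*c'+c*b'+d*a') (b*d'+c*c'+d*b'-a*a') (c*d'+d*c'-a*b'-b*a') (d*d'-a*c'-b*b'-c*a') := by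
  simp only [zω]
  push_cast
  linear_combination ((a:ℂ)*a'*ω^2 + ((a:ℂ)*b'+(b:ℂ)*a')*ω + ((a:ℂ)*c'+(b:ℂ)*b'+(c:ℂ)*a')) * ω4
lemma zω_conj (a b c d : ℤ) : (starRingEnd ℂ) (zω a b c d) = zω (-c) (-b) (-a) d := by
  have hcω : (starRingEnd ℂ) ω = -ω^3 := by
    have h3 : ω^3 = Complex.I * ω := by rw [pow_succ, ω2]
    rw [h3, ω, map_div₀, map_add, map_one, Complex.conj_I, Complex.conj_ofReal]
    have h0 := r2_ne
    field_simp
    linear_combination Complex.I_sq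
  simp only [zω, map_add, map_mul, map_pow, hcω, map_intCast]
  push_cast
  linear_combination (-(a:ℂ)*ω^5 + (a:ℂ)*ω + (b:ℂ)*ω^2) * ω4
lemma zω_sub (a b c d a' b' c' d' : ℤ) :
    zω a b c d - zω a' b' c' d' = zω (a-a') (b-b') (c-c') (d-d') := by
  simp only [zω]; push_cast; ring
lemma zω_pow2 (k : ℕ) : ((2:ℂ))^k = zω 0 0 0 (2^k) := by
  simp only [zω]; push_cast; ring
lemma sqrt2_mul (P Q R E : ℤ) :
    (Real.sqrt 2:ℂ) * zω P Q R E = zω (Q-E) (P+R) (Q+E) (R-P) := by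
  rw [hr]; simp only [zω]; push_cast
  linear_combination ((P:ℂ) - (P:ℂ)*ω^2 - (Q:ℂ)*ω - (R:ℂ)) * ω4
lemma zω_eq (a b c d : ℤ) :
    zω a b c d = Complex.ofReal ((d:ℝ) + (c-a)*Real.sqrt 2/2)
      + Complex.ofReal ((b:ℝ) + (a+c)*Real.sqrt 2/2) * Complex.I := by
  simp only [zω, hω]
  push_cast
  field_simp
  linear_combination ((a:ℂ)*(Real.sqrt 2:ℂ)^3*(3+Complex.I) + 2*(b:ℂ)*(Real.sqrt 2:ℂ)^2) * Complex.I_sq + ((a:ℂ)*(Real.sqrt 2:ℂ)*(-2+2*Complex.I) + 4*Complex.I*(b:ℂ)) * r2_sq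

lemma indep2 (A B C D : ℤ) (h : (A:ℝ) + B*Real.sqrt 2 = C + D*Real.sqrt 2) :
    A = C ∧ B = D := by
  by_cases hBD : B = D
  · subst hBD
    have : (A:ℝ) = C := by linarith
    exact ⟨by exact_mod_cast this, rfl⟩
  · exfalso
    have hDB : ((D - B:ℤ):ℝ) ≠ 0 := by
      exact Int.cast_ne_zero.mpr (sub_ne_zero.mpr (Ne.symm hBD))
    have hs : Real.sqrt 2 = ((A - C : ℤ):ℝ) / ((D - B : ℤ):ℝ) := by
      rw [eq_div_iff hDB]; push_cast; linarith
    have hcast : ((((A - C : ℤ) : ℚ) / ((D - B : ℤ) : ℚ) : ℚ) : ℝ) = Real.sqrt 2 := by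
      push_cast
      rw [hs]; push_cast; ring
    exact Rat.not_irrational _ (hcast ▸ irrational_sqrt_two)

lemma zω_inj {a b c d a' b' c' d' : ℤ} (h : zω a b c d = zω a' b' c' d') :
    a = a' ∧ b = b' ∧ c = c' ∧ d = d' := by
  rw [zω_eq, zω_eq] at h
  rw [Complex.ext_iff] at h
  obtain ⟨h1, h2⟩ := h
  simp only [Complex.add_re, Complex.add_im, Complex.ofReal_re, Complex.ofReal_im,
    Complex.mul_re, Complex.mul_im, Complex.I_re, Complex.I_im] at h1 h2
  have e1 := indep2 (2*d) (c-a) (2*d') (c'-a') (by push_cast; linarith)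
  have e2 := indep2 (2*b) (a+c) (2*b') (a'+c') (by push_cast; linarith)
  omega

lemma zω_div_sqrt2 (a b c d p q r e : ℤ)
    (h : (starRingEnd ℂ) (zω a b c d) * zω a b c d = 2 * zω p q r e) :
    ∃ a' b' c' d', zω a b c d = (Real.sqrt 2:ℂ) * zω a' b' c' d' := by
  rw [zω_conj, zω_mul, show ((2:ℂ)) = ((2:ℤ):ℂ) by norm_num,
    show ((2:ℤ):ℂ) * zω p q r e = zω (2*p) (2*q) (2*r) (2*e) by
      simp only [zω]; push_cast; ring] at h
  obtain ⟨h1, h2, h3, h4⟩ := zω_inj h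
  -- h4 : d*d - (-c)*c - (-b)*b - (-a)*a = 2*e  (squares sum)
  -- h3 : (-a)*d + d*c - (-c)*b - (-b)*a = 2*r
  have f1 : ((a:ZMod 2))^2 + (b:ZMod 2)^2 + (c:ZMod 2)^2 + (d:ZMod 2)^2 = 0 := by
    have := congrArg (fun n : ℤ => (n : ZMod 2)) h4
    push_cast at this
    rw [show ((2:ZMod 2)) = 0 by decide] at this
    linear_combination this
  have f2 : ((a:ZMod 2))*(b:ZMod 2) + (b:ZMod 2)*(c:ZMod 2) + (c:ZMod 2)*(d:ZMod 2)
      - (a:ZMod 2)*(d:ZMod 2) = 0 := by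
    have := congrArg (fun n : ℤ => (n : ZMod 2)) h3
    push_cast at this
    rw [show ((2:ZMod 2)) = 0 by decide] at this
    linear_combination this
  have key : ∀ x y z w : ZMod 2, x^2+y^2+z^2+w^2 = 0 → x*y+y*z+z*w-x*w = 0 →
      (x+z = 0 ∧ y+w = 0) := by decide
  obtain ⟨g1, g2⟩ := key _ _ _ _ f1 f2
  have d1 : (2:ℤ) ∣ (a + c) := by
    have : ((a + c : ℤ) : ZMod 2) = 0 := by push_cast; exact g1
    exact_mod_cast (ZMod.intCast_zmod_eq_zero_iff_dvd _ 2).mp this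
  have d2 : (2:ℤ) ∣ (b + d) := by
    have : ((b + d : ℤ) : ZMod 2) = 0 := by push_cast; exact g2
    exact_mod_cast (ZMod.intCast_zmod_eq_zero_iff_dvd _ 2).mp this
  obtain ⟨q₁, hq₁⟩ := d1
  obtain ⟨r₁, hr₁⟩ := d2
  refine ⟨r₁ - d, q₁, r₁, q₁ - a, ?_⟩
  rw [sqrt2_mul, show q₁ - (q₁ - a) = a from by ring,
    show (r₁ - d) + r₁ = b from by omega,
    show q₁ + (q₁ - a) = c from by omega,
    show r₁ - (r₁ - d) = d from by ring]

lemma half (x y : ℂ) (k : ℕ) (hxy : (starRingEnd ℂ) x * x + (starRingEnd ℂ) y * y = 1)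
    (hx : inZω ((Real.sqrt 2:ℂ)^k * x)) (hy : inZω ((Real.sqrt 2:ℂ)^(k+1) * y)) :
    inZω ((Real.sqrt 2:ℂ)^k * y) := by
  obtain ⟨a, b, c, d, hxz⟩ := hx
  obtain ⟨A, B, C, D, hyz⟩ := hy
  have e1 : ((Real.sqrt 2:ℂ))^(k+1) * ((Real.sqrt 2:ℂ))^(k+1) = 2^(k+1) := by
    rw [← pow_add, show k+1+(k+1) = 2*(k+1) from by ring, pow_mul, r2_sq]
  have e2 : ((Real.sqrt 2:ℂ))^k * ((Real.sqrt 2:ℂ))^k = 2^k := by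
    rw [← pow_add, show k+k = 2*k from by ring, pow_mul, r2_sq]
  have key : (starRingEnd ℂ) ((Real.sqrt 2:ℂ)^(k+1)*y) * ((Real.sqrt 2:ℂ)^(k+1)*y)
      = 2*((2:ℂ)^k - (starRingEnd ℂ) ((Real.sqrt 2:ℂ)^k*x) * ((Real.sqrt 2:ℂ)^k*x)) := by
    simp only [map_mul, map_pow, Complex.conj_ofReal]
    linear_combination ((starRingEnd ℂ) y * y) * e1 + (2*(starRingEnd ℂ) x * x) * e2
      + (2:ℂ)^(k+1) * hxy
  rw [hxz, hyz, zω_pow2, zω_conj a b c d, zω_mul, zω_sub] at key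
  obtain ⟨a', b', c', d', hdiv⟩ := zω_div_sqrt2 _ _ _ _ _ _ _ _ key
  refine ⟨a', b', c', d', ?_⟩
  have : (Real.sqrt 2:ℂ) * ((Real.sqrt 2:ℂ)^k * y) = (Real.sqrt 2:ℂ) * zω a' b' c' d' := by
    rw [← hdiv, ← hyz]; ring
  exact mul_left_cancel₀ r2_ne this

lemma inZω_r2mul {z : ℂ} (h : inZω z) : inZω ((Real.sqrt 2:ℂ) * z) := by
  obtain ⟨a, b, c, d, hz⟩ := h
  exact ⟨_, _, _, _, by rw [hz, sqrt2_mul]⟩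

lemma inZω_pow_mul {z : ℂ} (h : inZω z) (m : ℕ) : inZω ((Real.sqrt 2:ℂ)^m * z) := by
  induction m with
  | zero => simpa using h
  | succ n ih =>
    rw [pow_succ', mul_assoc]
    exact inZω_r2mul ih

lemma descend (x y : ℂ) (k : ℕ) (hxy : (starRingEnd ℂ) x * x + (starRingEnd ℂ) y * y = 1)
    (hx : inZω ((Real.sqrt 2:ℂ)^k * x)) :
    ∀ j, inZω ((Real.sqrt 2:ℂ)^(k+j) * y) → inZω ((Real.sqrt 2:ℂ)^k * y) := by
  intro j
  induction j with
  | zero => simpa using id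
  | succ n ih =>
    intro h
    refine ih (half x y (k+n) hxy ?_ (by rw [show k+n+1 = k+(n+1) from rfl]; exact h))
    have heq : (Real.sqrt 2:ℂ)^(k+n) * x = (Real.sqrt 2:ℂ)^n * ((Real.sqrt 2:ℂ)^k * x) := by
      rw [← mul_assoc, ← pow_add, Nat.add_comm]
    rw [heq]
    exact inZω_pow_mul hx n

lemma mono (x y : ℂ) (hy : inDω y)
    (hxy : (starRingEnd ℂ) x * x + (starRingEnd ℂ) y * y = 1) (k : ℕ)
    (hx : inZω ((Real.sqrt 2:ℂ)^k * x)) : inZω ((Real.sqrt 2:ℂ)^k * y) := by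
  obtain ⟨m, hm⟩ := hy
  rcases le_or_gt m k with hmk | hkm
  · have heq : (Real.sqrt 2:ℂ)^k * y = (Real.sqrt 2:ℂ)^(k-m) * ((Real.sqrt 2:ℂ)^m * y) := by
      rw [← mul_assoc, ← pow_add]
      congr 2
      omega
    rw [heq]
    exact inZω_pow_mul hm _
  · exact descend x y k hxy hx (m-k) (by rw [show k+(m-k) = m from by omega]; exact hm)


/-- If U = [[u, −t†],[t, u†]] is unitary with u, t ∈ D[ω], then u and t have exactly the
    same denominator exponents; in particular the same least denominator exponent. -/
theorem same_denominator_exponents (u t : ℂ) (hu : inDω u) (ht : inDω t)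
    (hU : (Matrix.of ![![u, -(starRingEnd ℂ) t], ![t, (starRingEnd ℂ) u]]) ∈
      Matrix.unitaryGroup (Fin 2) ℂ) :
    ∀ k : ℕ, (inZω ((Real.sqrt 2 : ℂ) ^ k * u) ↔ inZω ((Real.sqrt 2 : ℂ) ^ k * t)) := by
  have h00 := congrFun (congrFun (Matrix.mem_unitaryGroup_iff.mp hU) 0) 0
  simp [Matrix.mul_apply, Fin.sum_univ_two, Matrix.one_apply, Matrix.star_apply,
    Matrix.of_apply] at h00
  have hut : (starRingEnd ℂ) u * u + (starRingEnd ℂ) t * t = 1 := by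
    linear_combination h00
  intro k
  constructor
  · exact mono u t ht hut k
  · exact mono t u hu (by linear_combination hut) k
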